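/- Let (V,Q) be a non-degenerate quadratic space over a field K with [(V,Q)] = 0 in the Witt group WQ(K), and let W = W^⊥ be a totally singular subspace of V (Q(W) = 0). Then for every g ∈ O(V,Q), the Dickson invariant satisfies D(g) = (−1)^{dim(W/(W ∩ Wg))}. -/

import Mathlib

open QuadraticMap

/-- Orthogonal complement of a submodule with respect to the polarization of `Q`. -/
def qperp {K V : Type*} [Field K] [AddCommGroup V] [Module K V]
    (Q : QuadraticForm K V) (U : Submodule K V) : Submodule K V :=
  LinearMap.BilinForm.orthogonal Q.polarBilin U

/-- `Q` is non-degenerate: the radical of its polarization is zero. -/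
def QNondeg {K V : Type*} [Field K] [AddCommGroup V] [Module K V]
    (Q : QuadraticForm K V) : Prop :=
  LinearMap.BilinForm.Nondegenerate Q.polarBilin

section Aux

open LinearMap Submodule Module

universe u v

variable {K : Type u} [Field K]

lemma aux_finrank_comap_subtype {V : Type v} [AddCommGroup V] [Module K V]
    [FiniteDimensional K V] (p q : Submodule K V) :
    finrank K ↥(q.comap p.subtype) = finrank K ↥(q ⊓ p) := by
  have h : q.comap p.subtype = (q ⊓ p).comap p.subtype := by
    ext ⟨z, hz⟩; simp [hz]
  rw [h]
  exact (Submodule.comapSubtypeEquivOfLe (inf_le_right : q ⊓ p ≤ p)).finrank_eq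

lemma aux_skew {E : Type v} [AddCommGroup E] [Module K E] (F : LinearMap.BilinForm K E)
    (halt : ∀ v, F v v = 0) (a b : E) : F a b = - F b a := by
  have h := halt (a + b)
  simp only [map_add, LinearMap.add_apply, halt] at h
  linear_combination h

lemma aux_alt_even_aux (n : ℕ) :
    ∀ {E : Type v} [AddCommGroup E] [Module K E] [FiniteDimensional K E]
      (F : LinearMap.BilinForm K E), finrank K E ≤ n → (∀ v, F v v = 0) →
      Even (finrank K E - finrank K ↥(LinearMap.ker F)) := by
  induction n with
  | zero =>
    intro E _ _ _ F hn halt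
    simp [Nat.le_zero.mp (le_trans (Nat.sub_le _ _) hn)]
  | succ n ih =>
    intro E _ _ _ F hn halt
    by_cases h0 : ∀ x y, F x y = 0
    · have : LinearMap.ker F = ⊤ := by
        ext v; simp only [LinearMap.mem_ker, Submodule.mem_top, iff_true]
        ext w; exact h0 v w
      rw [this, finrank_top, Nat.sub_self]
      exact Even.zero
    push_neg at h0
    obtain ⟨x, y, hxy⟩ := h0
    have hskew := aux_skew F halt
    have hrefl : F.IsRefl := fun a b hab => by rw [hskew]; simp [hab]
    have hx0 : x ≠ 0 := by rintro rfl; simp at hxy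
    have hy0 : y ≠ 0 := by rintro rfl; simp at hxy
    set P : Submodule K E := (K ∙ x) ⊔ (K ∙ y) with hP
    have hxP : x ∈ P := Submodule.mem_sup_left (Submodule.mem_span_singleton_self x)
    have hyP : y ∈ P := Submodule.mem_sup_right (Submodule.mem_span_singleton_self y)
    -- dim P = 2
    have hdisj : (K ∙ x) ⊓ (K ∙ y) = ⊥ := by
      rw [eq_bot_iff]
      rintro z ⟨hz1, hz2⟩
      obtain ⟨a, rfl⟩ := Submodule.mem_span_singleton.mp hz1
      obtain ⟨b, hb⟩ := Submodule.mem_span_singleton.mp hz2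
      rcases eq_or_ne a 0 with rfl | ha
      · simp
      · exfalso
        apply hxy
        have hx' : x = (a⁻¹ * b) • y := by
          rw [mul_smul, hb, inv_smul_smul₀ ha]
        rw [hx', _root_.map_smul]
        simp [halt]
    have hPdim : finrank K ↥P = 2 := by
      have := Submodule.finrank_sup_add_finrank_inf_eq (K ∙ x) (K ∙ y)
      rw [hdisj, finrank_bot, finrank_span_singleton hx0, finrank_span_singleton hy0] at this
      rw [hP]
      omega
    -- restriction to P is nondegenerate
    have hPnd : (F.restrict P).Nondegenerate := by
      refine LinearMap.BilinForm.Nondegenerate.ofSeparatingLeft ?_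
      rintro ⟨z, hz⟩ hz0
      have h1 : F z x = 0 := hz0 ⟨x, hxP⟩
      have h2 : F z y = 0 := hz0 ⟨y, hyP⟩
      obtain ⟨z1, hz1, z2, hz2, rfl⟩ := Submodule.mem_sup.mp hz
      obtain ⟨a, rfl⟩ := Submodule.mem_span_singleton.mp hz1
      obtain ⟨b, rfl⟩ := Submodule.mem_span_singleton.mp hz2
      simp only [map_add, _root_.map_smul, LinearMap.add_apply, LinearMap.smul_apply,
        smul_eq_mul, halt] at h1 h2
      have hba : F y x = - F x y := by rw [hskew]
      rw [hba] at h1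
      have ha : a = 0 := by
        have : a * F x y = 0 := by linear_combination h2
        rcases mul_eq_zero.mp this with h | h
        · exact h
        · exact absurd h hxy
      have hb : b = 0 := by
        have : b * F x y = 0 := by linear_combination -h1
        rcases mul_eq_zero.mp this with h | h
        · exact h
        · exact absurd h hxy
      ext
      simp [ha, hb]
    have hc : IsCompl P (F.orthogonal P) :=
      LinearMap.BilinForm.isCompl_orthogonal_of_restrict_nondegenerate hrefl hPnd
    have hdim : finrank K ↥P + finrank K ↥(F.orthogonal P) = finrank K E :=
      Submodule.finrank_add_eq_of_isCompl hc
    -- kernel identification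
    have hker : (LinearMap.ker (F.restrict (F.orthogonal P))).map (F.orthogonal P).subtype
        = LinearMap.ker F := by
      ext v
      constructor
      · rintro ⟨⟨v, hv⟩, hvk, rfl⟩
        simp only [LinearMap.mem_ker] at hvk ⊢
        ext w
        have hw : w ∈ P ⊔ F.orthogonal P := hc.codisjoint.eq_top ▸ Submodule.mem_top
        obtain ⟨p, hp, q, hq, rfl⟩ := Submodule.mem_sup.mp hw
        have h1 : F v p = 0 := by
          rw [hskew]; rw [hv p hp]; simp
        have h2 : F v q = 0 := by
          have := LinearMap.congr_fun hvk ⟨q, hq⟩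
          simpa using this
        simp [map_add, h1, h2]
      · intro hv
        rw [LinearMap.mem_ker] at hv
        have hvO : v ∈ F.orthogonal P := fun p _ => show F p v = 0 by
          rw [hskew p v, hv]; simp
        refine ⟨⟨v, hvO⟩, ?_, rfl⟩
        simp only [SetLike.mem_coe, LinearMap.mem_ker]
        ext ⟨w, hw⟩
        simp only [LinearMap.BilinForm.restrict_apply]
        rw [hv]; simp
    have hkerdim : finrank K ↥(LinearMap.ker F)
        = finrank K ↥(LinearMap.ker (F.restrict (F.orthogonal P))) := by
      rw [← hker]
      exact (Submodule.finrank_map_subtype_eq _ _)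
    have haltO : ∀ v : ↥(F.orthogonal P), (F.restrict (F.orthogonal P)) v v = 0 :=
      fun v => halt v
    have hle : finrank K ↥(F.orthogonal P) ≤ n := by omega
    have := ih (F.restrict (F.orthogonal P)) hle haltO
    have hkle : finrank K ↥(LinearMap.ker (F.restrict (F.orthogonal P)))
        ≤ finrank K ↥(F.orthogonal P) := Submodule.finrank_le _
    obtain ⟨r, hr⟩ := this
    refine ⟨r + 1, ?_⟩
    omega

lemma aux_alt_even {E : Type v} [AddCommGroup E] [Module K E] [FiniteDimensional K E]
    (F : LinearMap.BilinForm K E) (halt : ∀ v, F v v = 0) :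
    Even (finrank K E - finrank K ↥(LinearMap.ker F)) :=
  aux_alt_even_aux (finrank K E) F le_rfl halt

lemma aux_pow_parity (a b : ℕ) (h : a % 2 = b % 2) : ((-1 : ℤ)) ^ a = (-1) ^ b := by
  rcases Nat.even_or_odd a with ha | ha
  · have hb : Even b := by rw [Nat.even_iff] at *; omega
    rw [ha.neg_one_pow, hb.neg_one_pow]
  · have hb : Odd b := by rw [Nat.odd_iff] at *; omega
    rw [ha.neg_one_pow, hb.neg_one_pow]

variable {V : Type v} [AddCommGroup V] [Module K V] [FiniteDimensional K V]
  {B : LinearMap.BilinForm K V}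

lemma aux_orth_sup (S S' : Submodule K V) :
    B.orthogonal (S ⊔ S') = B.orthogonal S ⊓ B.orthogonal S' := by
  ext v
  simp only [LinearMap.BilinForm.mem_orthogonal_iff, Submodule.mem_inf]
  constructor
  · exact fun h => ⟨fun n hn => h n (Submodule.mem_sup_left hn),
      fun n hn => h n (Submodule.mem_sup_right hn)⟩
  · rintro ⟨h1, h2⟩ n hn
    obtain ⟨a, ha, b, hb, rfl⟩ := Submodule.mem_sup.mp hn
    show B (a + b) v = 0
    rw [map_add, LinearMap.add_apply, h1 a ha, h2 b hb, add_zero]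

lemma aux_orth_inf (hnd : B.Nondegenerate) (hrefl : B.IsRefl) (S S' : Submodule K V) :
    B.orthogonal (S ⊓ S') = B.orthogonal S ⊔ B.orthogonal S' := by
  have h1 : B.orthogonal S ⊔ B.orthogonal S' ≤ B.orthogonal (S ⊓ S') :=
    sup_le (LinearMap.BilinForm.orthogonal_le inf_le_left)
      (LinearMap.BilinForm.orthogonal_le inf_le_right)
  refine (Submodule.eq_of_le_of_finrank_le h1 ?_).symm
  have e1 := LinearMap.BilinForm.finrank_orthogonal hnd (S ⊓ S')
  have e2 := LinearMap.BilinForm.finrank_orthogonal hnd S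
  have e3 := LinearMap.BilinForm.finrank_orthogonal hnd S'
  have e4 := LinearMap.BilinForm.finrank_orthogonal hnd (S ⊔ S')
  have e5 := Submodule.finrank_sup_add_finrank_inf_eq (B.orthogonal S) (B.orthogonal S')
  rw [← aux_orth_sup S S', e2, e3, e4] at e5
  have e6 := Submodule.finrank_sup_add_finrank_inf_eq S S'
  have l1 := Submodule.finrank_le S
  have l2 := Submodule.finrank_le S'
  have l3 := Submodule.finrank_le (S ⊔ S')
  have l4 := Submodule.finrank_le (S ⊓ S')
  omega

end Aux

/-- if `(V,Q)` is split (contains a totally singular `W = W^⊥`), then the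
Dickson invariant `D(g) = (−1)^{rank (g − id)}` satisfies
`D(g) = (−1)^{dim (W / (W ∩ Wg))}` for every `g ∈ O(V,Q)`. -/
theorem stmt18 {K V : Type*} [Field K] [AddCommGroup V] [Module K V]
    [FiniteDimensional K V] (Q : QuadraticForm K V) (hnd : QNondeg Q)
    (W : Submodule K V) (hW : W = qperp Q W) (hW0 : ∀ v ∈ W, Q v = 0)
    (g : V ≃ₗ[K] V) (hg : ∀ v, Q (g v) = Q v) :
    ((-1 : ℤ) ^ Module.finrank K ↥(LinearMap.range ((g : V →ₗ[K] V) - LinearMap.id))) =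
      (-1 : ℤ) ^ (Module.finrank K ↥W -
        Module.finrank K ↥(W ⊓ W.map (g : V →ₗ[K] V))) := by
  classical
  open LinearMap Submodule Module in
  set B : LinearMap.BilinForm K V := Q.polarBilin with hB
  have hndB : B.Nondegenerate := hnd
  have hBapp : ∀ x y, B x y = Q (x + y) - Q x - Q y := fun x y => rfl
  have hrefl : B.IsRefl := by
    intro x y h
    rw [hBapp] at h ⊢
    rw [add_comm]
    linear_combination h
  have hBg : ∀ x y, B (g x) (g y) = B x y := by
    intro x y
    rw [hBapp, hBapp, ← map_add, hg, hg, hg]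
  set T : V →ₗ[K] V := (g : V →ₗ[K] V) - LinearMap.id with hT
  have hTapp : ∀ v, T v = g v - v := fun v => rfl
  set U : Submodule K V := LinearMap.range T with hU
  set Kk : Submodule K V := LinearMap.ker T with hKk
  set n : ℕ := Module.finrank K V with hn
  have e1 : Module.finrank K ↥U + Module.finrank K ↥Kk = n :=
    LinearMap.finrank_range_add_finrank_ker T
  -- W is its own orthogonal
  have hWo : W = B.orthogonal W := hW
  have hWW : ∀ a ∈ W, ∀ b ∈ W, B a b = 0 := by
    intro a ha b hb
    rw [hWo] at hb
    exact hb a ha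
  have e2 : Module.finrank K ↥W + Module.finrank K ↥W = n := by
    have := LinearMap.BilinForm.finrank_orthogonal hndB W
    rw [← hWo] at this
    have hle := Submodule.finrank_le W
    omega
  -- kernel = orthogonal of range
  have hKU : Kk = B.orthogonal U := by
    have hle : Kk ≤ B.orthogonal U := by
      intro v hv
      rintro u ⟨w, rfl⟩
      have hgv : g v = v := by
        have : T v = 0 := hv
        rw [hTapp] at this
        rw [← sub_eq_zero]
        exact this
      show B (T w) v = 0
      rw [hTapp, _root_.map_sub, LinearMap.sub_apply]
      calc B (g w) v - B w v = B (g w) (g v) - B w v := by rw [hgv]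
        _ = 0 := by rw [hBg, sub_self]
    refine Submodule.eq_of_le_of_finrank_le hle ?_
    rw [LinearMap.BilinForm.finrank_orthogonal hndB U]
    omega
  set X : Submodule K V := U ⊓ W with hX
  set Y : Submodule K V := (W.map T) ⊓ W with hY
  set M : Submodule K V := W.comap T with hM
  set A : Submodule K V := W ⊓ M with hA
  have hKM : Kk ≤ M := by
    intro v hv
    have : T v = 0 := hv
    show T v ∈ W
    rw [this]; exact W.zero_mem
  have hAM : A ≤ M := inf_le_right
  have hAW : A ≤ W := inf_le_left
  -- rank–nullity for restrictions of T
  have auxrn : ∀ S : Submodule K V, Module.finrank K ↥S =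
      Module.finrank K ↥(S.map T) + Module.finrank K ↥(Kk ⊓ S) := by
    intro S
    have h := LinearMap.finrank_range_add_finrank_ker (T ∘ₗ S.subtype)
    rw [LinearMap.range_comp, Submodule.range_subtype, LinearMap.ker_comp] at h
    rw [← h, aux_finrank_comap_subtype]
  -- images
  have hMX : M.map T = X := by
    apply le_antisymm
    · rintro _ ⟨v, hv, rfl⟩
      exact ⟨LinearMap.mem_range_self T v, hv⟩
    · rintro x ⟨hxU, hxW⟩
      obtain ⟨v, rfl⟩ := hxU
      exact ⟨v, hxW, rfl⟩
  have hAY : A.map T = Y := by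
    apply le_antisymm
    · rintro _ ⟨v, ⟨hvW, hvM⟩, rfl⟩
      exact ⟨Submodule.mem_map_of_mem hvW, hvM⟩
    · rintro y ⟨hy1, hy2⟩
      obtain ⟨w, hw, rfl⟩ := hy1
      exact ⟨w, ⟨hw, hy2⟩, rfl⟩
  have hKkM : Kk ⊓ M = Kk := inf_eq_left.mpr hKM
  have hKkA : Kk ⊓ A = W ⊓ Kk := by
    ext v
    simp only [hA, Submodule.mem_inf]
    exact ⟨fun ⟨h1, h2, _⟩ => ⟨h2, h1⟩, fun ⟨h1, h2⟩ => ⟨h2, h1, hKM h2⟩⟩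
  have e5 : Module.finrank K ↥M = Module.finrank K ↥X + Module.finrank K ↥Kk := by
    have := auxrn M
    rw [hMX, hKkM] at this
    omega
  have e6 : Module.finrank K ↥A = Module.finrank K ↥Y + Module.finrank K ↥(W ⊓ Kk) := by
    have := auxrn A
    rw [hAY, hKkA] at this
    omega
  -- W ⊓ Kk as orthogonal of U ⊔ W
  have e3 : Module.finrank K ↥(W ⊓ Kk) + Module.finrank K ↥(U ⊔ W) = n := by
    have horth : B.orthogonal (U ⊔ W) = W ⊓ Kk := by
      rw [aux_orth_sup, ← hWo, ← hKU, inf_comm]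
    have := LinearMap.BilinForm.finrank_orthogonal hndB (U ⊔ W)
    rw [horth] at this
    have hle := Submodule.finrank_le (U ⊔ W)
    omega
  have e4 : Module.finrank K ↥(U ⊔ W) + Module.finrank K ↥X =
      Module.finrank K ↥U + Module.finrank K ↥W := by
    have := Submodule.finrank_sup_add_finrank_inf_eq U W
    rw [← hX] at this
    omega
  -- the Wall-type form on M
  set F : LinearMap.BilinForm K ↥M := B.compl₁₂ (T ∘ₗ M.subtype) M.subtype with hF
  have hFapp : ∀ v w : ↥M, F v w = B (T ↑v) ↑w := fun v w => rfl
  have halt : ∀ v : ↥M, F v v = 0 := by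
    rintro ⟨v, hv⟩
    have hvW : T v ∈ W := hv
    rw [hFapp]
    show B (T v) v = 0
    rw [hBapp, hTapp]
    have h1 : g v - v + v = g v := by abel
    rw [h1, hg, ← hTapp, hW0 _ hvW]
    ring
  have hskew := aux_skew F halt
  -- kernel of F
  have hkerF : LinearMap.ker F = (B.orthogonal X).comap M.subtype := by
    ext v
    constructor
    · intro hv
      rintro x hx
      rw [← hMX] at hx
      obtain ⟨w, hw, rfl⟩ := hx
      show B (T w) ↑v = 0
      have h1 : F v ⟨w, hw⟩ = 0 := by
        rw [LinearMap.mem_ker] at hv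
        rw [hv]; simp
      have h2 := hskew ⟨w, hw⟩ v
      rw [h1] at h2
      rw [hFapp] at h2
      rw [h2]; ring
    · intro hv
      rw [LinearMap.mem_ker]
      ext w
      rw [hFapp]
      have hTw : T ↑w ∈ X := by
        rw [← hMX]
        exact Submodule.mem_map_of_mem w.2
      have h1 : B (T ↑w) ↑v = 0 := hv _ hTw
      have h2 := hskew v w
      rw [hFapp, hFapp] at h2
      rw [h2, h1]; simp
  have horthX : B.orthogonal X ⊓ M = A ⊔ Kk := by
    apply le_antisymm
    · rintro v ⟨h1, h2⟩
      rw [hX, aux_orth_inf hndB hrefl, ← hKU, ← hWo] at h1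
      obtain ⟨k, hk, w, hw, rfl⟩ := Submodule.mem_sup.mp h1
      have hwM : w ∈ M := by
        have hkM : k ∈ M := hKM hk
        have : (k + w) - k ∈ M := Submodule.sub_mem M h2 hkM
        simpa using this
      exact Submodule.add_mem _ (Submodule.mem_sup_right hk)
        (Submodule.mem_sup_left ⟨hw, hwM⟩)
    · apply sup_le
      · intro a ha
        refine ⟨?_, ha.2⟩
        have h1 : B.orthogonal W ≤ B.orthogonal X :=
          LinearMap.BilinForm.orthogonal_le inf_le_right
        apply h1
        rw [← hWo]
        exact ha.1
      · intro k hk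
        refine ⟨?_, hKM hk⟩
        have h1 : B.orthogonal U ≤ B.orthogonal X :=
          LinearMap.BilinForm.orthogonal_le inf_le_left
        apply h1
        rw [← hKU]
        exact hk
  have e7 : Module.finrank K ↥(LinearMap.ker F) = Module.finrank K ↥(A ⊔ Kk) := by
    rw [hkerF, aux_finrank_comap_subtype, horthX]
  have e8 : Module.finrank K ↥(A ⊔ Kk) + Module.finrank K ↥(W ⊓ Kk) =
      Module.finrank K ↥A + Module.finrank K ↥Kk := by
    have := Submodule.finrank_sup_add_finrank_inf_eq A Kk
    have hAKk : A ⊓ Kk = W ⊓ Kk := by rw [inf_comm]; exact hKkA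
    rw [hAKk] at this
    omega
  have heven : Even (Module.finrank K ↥M - Module.finrank K ↥(LinearMap.ker F)) :=
    aux_alt_even F halt
  have hkerle : Module.finrank K ↥(LinearMap.ker F) ≤ Module.finrank K ↥M :=
    Submodule.finrank_le _
  -- identify W ⊓ W.map g with A
  have e9 : Module.finrank K ↥(W ⊓ W.map (g : V →ₗ[K] V)) = Module.finrank K ↥A := by
    have hcomap : W ⊓ W.comap (g : V →ₗ[K] V) = A := by
      ext v
      simp only [hA, hM, Submodule.mem_inf, Submodule.mem_comap]
      constructor
      · rintro ⟨h1, h2⟩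
        exact ⟨h1, Submodule.sub_mem W h2 h1⟩
      · rintro ⟨h1, h2⟩
        refine ⟨h1, ?_⟩
        have : T v + v ∈ W := Submodule.add_mem W h2 h1
        have hTv : T v + v = g v := by rw [hTapp]; abel
        rwa [hTv] at this
    have hmap : (W ⊓ W.comap (g : V →ₗ[K] V)).map (g : V →ₗ[K] V)
        = W.map (g : V →ₗ[K] V) ⊓ W := by
      apply le_antisymm
      · rintro _ ⟨v, ⟨hv1, hv2⟩, rfl⟩
        exact ⟨Submodule.mem_map_of_mem hv1, hv2⟩
      · rintro v ⟨hv1, hv2⟩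
        obtain ⟨w, hw, rfl⟩ := hv1
        exact ⟨w, ⟨hw, by simpa using hv2⟩, rfl⟩
    have := LinearEquiv.finrank_map_eq g (W ⊓ W.comap (g : V →ₗ[K] V))
    rw [hmap, hcomap] at this
    rw [inf_comm, this]
  have hAleW : Module.finrank K ↥A ≤ Module.finrank K ↥W :=
    Submodule.finrank_mono hAW
  -- final parity computation
  obtain ⟨r, hr⟩ := heven
  apply aux_pow_parity
  rw [e9]
  omega
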